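/- Let S : [0,1] × {0,1} → ℝ be a proper scoring rule that is L-Lipschitz in its first argument, let b ≥ 0, let m ≥ 2 be a natural number, and let j be a natural number with m/2 ≤ j ≤ m − 1. Then 0 ≤ b·[ (S((j+1)/m, 1) − S(j/m, 1)) + ((m − j)/j)·(S((j+1)/m, 0) − S(j/m, 0)) ] ≤ 4bL/m². -/

import Mathlib

/-- The affine extension of a scoring rule `S : [0,1] × {0,1} → ℝ` to
`S̄(x, p) = (1−p)·S(x,0) + p·S(x,1)`. -/
noncomputable def Sbar (S : ℝ → Fin 2 → ℝ) (x p : ℝ) : ℝ :=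
  (1 - p) * S x 0 + p * S x 1

/-- A scoring rule is proper if truthfully reporting minimizes the expected score. -/
def ProperScoringRule (S : ℝ → Fin 2 → ℝ) : Prop :=
  ∀ p ∈ Set.Icc (0:ℝ) 1, ∀ x ∈ Set.Icc (0:ℝ) 1, Sbar S p p ≤ Sbar S x p

/-- `S` is `L`-Lipschitz in its first argument on `[0,1]`. -/
def LipschitzScoringRule (S : ℝ → Fin 2 → ℝ) (L : ℝ) : Prop :=
  ∀ x ∈ Set.Icc (0:ℝ) 1, ∀ x' ∈ Set.Icc (0:ℝ) 1, ∀ y : Fin 2,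
    |S x y - S x' y| ≤ L * |x - x'|

set_option maxHeartbeats 1000000 in
/-- The key vertical-gap estimate in the proof of Lemma 3.2: the gap between
`D((j+1)/m)` on the scoring-rule curve and the point directly below it on the
tangent line at `D(j/m)` is between `0` and `4bL/m²`. -/
theorem stmt19 (S : ℝ → Fin 2 → ℝ) (L : ℝ)
    (hproper : ProperScoringRule S) (hlip : LipschitzScoringRule S L)
    (b : ℝ) (hb : 0 ≤ b) (m : ℕ) (hm : 2 ≤ m) (j : ℕ)
    (hj1 : (m : ℝ) / 2 ≤ j) (hj2 : j ≤ m - 1) :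
    0 ≤ b * ((S (((j : ℝ) + 1) / m) 1 - S ((j : ℝ) / m) 1) +
          (((m : ℝ) - j) / j) * (S (((j : ℝ) + 1) / m) 0 - S ((j : ℝ) / m) 0)) ∧
    b * ((S (((j : ℝ) + 1) / m) 1 - S ((j : ℝ) / m) 1) +
          (((m : ℝ) - j) / j) * (S (((j : ℝ) + 1) / m) 0 - S ((j : ℝ) / m) 0))
      ≤ 4 * b * L / m ^ 2 := by
  have hmR : (2:ℝ) ≤ m := by exact_mod_cast hm
  have hm0 : (0:ℝ) < m := by linarith
  have hjR : (1:ℝ) ≤ j := by linarith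
  have hj0 : (0:ℝ) < j := by linarith
  have hjm : j + 1 ≤ m := by omega
  have hjmR : (j:ℝ) + 1 ≤ m := by exact_mod_cast hjm
  set p : ℝ := (j:ℝ)/m with hpdef
  set q : ℝ := ((j:ℝ)+1)/m with hqdef
  have hp : p ∈ Set.Icc (0:ℝ) 1 :=
    ⟨by rw [hpdef]; positivity, by rw [hpdef, div_le_one hm0]; linarith⟩
  have hq : q ∈ Set.Icc (0:ℝ) 1 :=
    ⟨by rw [hqdef]; positivity, by rw [hqdef, div_le_one hm0]; linarith⟩
  have h1 := hproper p hp q hq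
  have h2 := hproper q hq p hp
  simp only [Sbar] at h1 h2
  set a : ℝ := S q 1 - S p 1 with hadef
  set c : ℝ := S q 0 - S p 0 with hcdef
  have hc := hlip q hq p hp 0
  clear_value p q a c
  have hL0 : 0 ≤ L := by
    have h := hlip 0 ⟨le_refl 0, zero_le_one⟩ 1 ⟨zero_le_one, le_refl 1⟩ 0
    simp at h
    exact le_trans (abs_nonneg _) h
  have hqp : q - p = 1/m := by
    rw [hpdef, hqdef]; field_simp; ring
  rw [hqp, abs_of_pos (by positivity : (0:ℝ) < 1/(m:ℝ)), mul_one_div, ← hcdef] at hc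
  have hcle : c ≤ L/m := (abs_le.mp hc).2
  have h1' : 0 ≤ (1-p)*c + p*a := by rw [hadef, hcdef]; nlinarith [h1]
  have h2' : (1-q)*c + q*a ≤ 0 := by rw [hadef, hcdef]; nlinarith [h2]
  rw [hpdef] at h1'
  rw [hqdef] at h2'
  have hmne : (m:ℝ) ≠ 0 := ne_of_gt hm0
  have hjne : (j:ℝ) ≠ 0 := ne_of_gt hj0
  have hA1 : 0 ≤ ((m:ℝ)-j)*c + j*a := by
    have hh := mul_le_mul_of_nonneg_left h1' hm0.le
    have h5 : (m:ℝ)*((j:ℝ)/m) = j := mul_div_cancel₀ _ hmne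
    have heq : (m:ℝ)*((1-(j:ℝ)/m)*c + ((j:ℝ)/m)*a) = ((m:ℝ)-j)*c + j*a := by
      linear_combination (a - c) * h5
    rw [mul_zero, heq] at hh; exact hh
  have hA2 : ((m:ℝ)-j-1)*c + ((j:ℝ)+1)*a ≤ 0 := by
    have hh := mul_le_mul_of_nonneg_left h2' hm0.le
    have h5 : (m:ℝ)*(((j:ℝ)+1)/m) = (j:ℝ)+1 := mul_div_cancel₀ _ hmne
    have heq : (m:ℝ)*((1-((j:ℝ)+1)/m)*c + (((j:ℝ)+1)/m)*a)
        = ((m:ℝ)-j-1)*c + ((j:ℝ)+1)*a := by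
      linear_combination (a - c) * h5
    rw [mul_zero, heq] at hh; exact hh
  have heqT : a + (((m:ℝ)-j)/j) * c = (((m:ℝ)-j)*c + j*a)/j := by
    have h5 : ((j:ℝ))*(1/j) = 1 := mul_one_div_cancel hjne
    field_simp
    ring
  have key1 : 0 ≤ a + (((m:ℝ)-j)/j) * c := by
    rw [heqT]; exact div_nonneg hA1 hj0.le
  have hT1 : ((j:ℝ)+1) * (((m:ℝ)-j)*c + j*a) ≤ (m:ℝ)*c := by
    nlinarith [mul_le_mul_of_nonneg_left hA2 hj0.le]
  have hmcL : (m:ℝ)*c ≤ L := by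
    have h3 := (le_div_iff₀ hm0).mp hcle
    linarith
  have hTL : ((j:ℝ)+1) * (((m:ℝ)-j)*c + j*a) ≤ L := le_trans hT1 hmcL
  have e1 : (0:ℝ) ≤ 2*(j:ℝ) - m := by linarith
  have h4j : (m:ℝ)^2 ≤ 4*j*((j:ℝ)+1) := by
    nlinarith [mul_nonneg e1 (by linarith : (0:ℝ) ≤ 2*(j:ℝ)+m), hj0]
  have key2 : a + (((m:ℝ)-j)/j) * c ≤ 4 * L / (m:ℝ)^2 := by
    rw [heqT, div_le_div_iff₀ hj0 (by positivity : (0:ℝ) < (m:ℝ)^2)]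
    nlinarith [mul_le_mul_of_nonneg_right hTL (sq_nonneg (m:ℝ)),
      mul_nonneg hL0 (by linarith : (0:ℝ) ≤ 4*j*((j:ℝ)+1) - (m:ℝ)^2), hj0]
  refine ⟨mul_nonneg hb key1, ?_⟩
  calc b * (a + (((m:ℝ)-j)/j) * c) ≤ b * (4*L/(m:ℝ)^2) :=
        mul_le_mul_of_nonneg_left key2 hb
    _ = 4*b*L/(m:ℝ)^2 := by ring
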